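/- Suppose β : V × V → W is a flat symmetric bilinear map into a positive definite inner product space, with trivial nullity N(β) = 0. Then dim S(β) ≥ dim V; in particular dim W ≥ dim V. -/

import Mathlib

set_option synthInstance.maxHeartbeats 1000000
set_option maxHeartbeats 1000000

open Module

private lemma aux_finite_bad {E : Type*} [AddCommGroup E] [Module ℝ E] [FiniteDimensional ℝ E]
    (Φ : E →ₗ[ℝ] E) :
    {t : ℝ | ¬ Function.Injective ((1 : E →ₗ[ℝ] E) + t • Φ)}.Finite := by
  classical
  set b := Module.finBasis ℝ E with hb
  set M : Matrix _ _ ℝ := LinearMap.toMatrixAlgEquiv b Φ with hM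
  set p : Polynomial ℝ := (1 + (Polynomial.X : Polynomial ℝ) • M.map Polynomial.C).det with hp
  have hmap : ∀ t : ℝ, (1 + (Polynomial.X : Polynomial ℝ) • M.map Polynomial.C).map (Polynomial.evalRingHom t)
      = 1 + t • M := by
    intro t
    ext i j
    simp only [Matrix.map_apply, Matrix.add_apply, Matrix.smul_apply, Matrix.one_apply,
      Polynomial.coe_evalRingHom, smul_eq_mul]
    by_cases h : i = j <;>
      · simp [h]
        ring
  have heval : ∀ t : ℝ, p.eval t = (1 + t • M).det := by
    intro t
    have h := RingHom.map_det (Polynomial.evalRingHom t) (1 + (Polynomial.X : Polynomial ℝ) • M.map Polynomial.C)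
    rw [RingHom.mapMatrix_apply, hmap t] at h
    simpa [hp] using h
  have hpne : p ≠ 0 := by
    intro h
    have h0 := heval 0
    rw [h] at h0
    simp at h0
  apply (Polynomial.finite_setOf_isRoot hpne).subset
  intro t ht
  simp only [Set.mem_setOf_eq] at ht ⊢
  by_contra hroot
  apply ht
  have hdet : (1 + t • M).det ≠ 0 := by
    rw [Polynomial.IsRoot] at hroot
    rwa [heval t] at hroot
  have hUnitM : IsUnit (1 + t • M) :=
    (Matrix.isUnit_iff_isUnit_det _).2 (isUnit_iff_ne_zero.2 hdet)
  have hMeq : LinearMap.toMatrixAlgEquiv b ((1 : E →ₗ[ℝ] E) + t • Φ) = 1 + t • M := by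
    simp [map_add, map_one, map_smul, hM]
  have hUnit : IsUnit ((1 : E →ₗ[ℝ] E) + t • Φ) := by
    have h2 := hUnitM.map (LinearMap.toMatrixAlgEquiv b).symm
    rwa [← hMeq, AlgEquiv.symm_apply_apply] at h2
  rw [← LinearMap.ker_eq_bot]
  exact (LinearMap.isUnit_iff_ker_eq_bot _).1 hUnit

private lemma aux_arith (P M' Mc t nu nw ε : ℝ) (hP0 : 0 ≤ P) (hM'0 : 0 ≤ M')
    (hMc0 : 0 ≤ Mc) (ht0 : 0 < t) (hnu0 : 0 ≤ nu) (hu2 : nu ≤ 2*t*P)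
    (hbound : nw ≤ (M'+Mc)*nu) (htδ2 : t ≤ ε/(2*(P+1)*(M'+Mc+1))) : nw ≤ ε := by
  have hq : (0:ℝ) < 2*(P+1)*(M'+Mc+1) := by nlinarith
  rw [le_div_iff₀ hq] at htδ2
  have ht0' : (0:ℝ) ≤ t := le_of_lt ht0
  nlinarith [mul_nonneg ht0' hP0, mul_nonneg ht0' hM'0, mul_nonneg ht0' hMc0,
    mul_nonneg (mul_nonneg ht0' hP0) hM'0, mul_nonneg (mul_nonneg ht0' hP0) hMc0,
    mul_le_mul_of_nonneg_left hu2 (add_nonneg hM'0 hMc0)]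

private lemma aux_key {V W : Type*} [AddCommGroup V] [Module ℝ V] [FiniteDimensional ℝ V]
    [NormedAddCommGroup W] [InnerProductSpace ℝ W] [FiniteDimensional ℝ W]
    (β : V →ₗ[ℝ] V →ₗ[ℝ] W) (e : V)
    (hmax : ∀ v : V, Module.finrank ℝ (LinearMap.range (β v))
      ≤ Module.finrank ℝ (LinearMap.range (β e)))
    (X : V) (hX : β e X = 0) (Y : V) : β Y X ∈ LinearMap.range (β e) := by
  classical
  set U := LinearMap.range (β e) with hUdef
  set K := LinearMap.ker (β e) with hKdef
  obtain ⟨C, hC⟩ := Submodule.exists_isCompl K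
  have hrankC : Module.finrank ℝ C = Module.finrank ℝ U := by
    have h1 := Submodule.finrank_add_eq_of_isCompl hC
    have h2 := LinearMap.finrank_range_add_finrank_ker (β e)
    rw [← hUdef, ← hKdef] at h2
    omega
  -- the map S0 : C → U, c ↦ β e c
  set S0 : C →ₗ[ℝ] U := ((β e).domRestrict C).codRestrict U
    (fun c => ⟨(c : V), rfl⟩) with hS0def
  have hS0coe : ∀ c : C, (S0 c : W) = β e (c : V) := fun c => rfl
  have hS0inj : Function.Injective S0 := by
    rw [← LinearMap.ker_eq_bot, LinearMap.ker_eq_bot']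
    intro c hc
    have h1 : β e (c : V) = 0 := by
      have := congrArg (Subtype.val) hc
      simpa [hS0coe] using this
    have h2 : (c : V) ∈ K := h1
    have h3 : (c : V) = 0 := Submodule.disjoint_def.1 hC.disjoint _ h2 c.2
    exact Subtype.ext h3
  set S : C ≃ₗ[ℝ] U := S0.linearEquivOfInjective hS0inj hrankC with hSdef
  have hSapp : ∀ c : C, S c = S0 c := fun c => S0.linearEquivOfInjective_apply hS0inj hrankC c
  set π : W →L[ℝ] U := U.orthogonalProjectionOnto with hπdef
  have hπU : ∀ u : U, π (u : W) = u := fun u => Submodule.orthogonalProjectionOnto_mem_subspace_eq_self u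
  set Φ : U →ₗ[ℝ] U := (π : W →ₗ[ℝ] U) ∘ₗ ((β Y).domRestrict C) ∘ₗ (S.symm : U →ₗ[ℝ] C)
    with hΦdef
  have hΦapp : ∀ u : U, Φ u = π (β Y ((S.symm u : C) : V)) := fun u => rfl
  obtain ⟨Mc, hMc0, hΦbound⟩ : ∃ Mc : ℝ, 0 ≤ Mc ∧ ∀ x : U, ‖Φ x‖ ≤ Mc * ‖x‖ := by
    refine ⟨‖LinearMap.toContinuousLinearMap Φ‖, ContinuousLinearMap.opNorm_nonneg _, fun x => ?_⟩
    have h := (LinearMap.toContinuousLinearMap Φ).le_opNorm x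
    rwa [LinearMap.coe_toContinuousLinearMap'] at h
  obtain ⟨M', hM'0, hΨbound⟩ : ∃ M' : ℝ, 0 ≤ M' ∧
      ∀ x : U, ‖β Y ((S.symm x : C) : V)‖ ≤ M' * ‖x‖ := by
    refine ⟨‖LinearMap.toContinuousLinearMap (((β Y).domRestrict C) ∘ₗ (S.symm : U →ₗ[ℝ] C))‖,
      ContinuousLinearMap.opNorm_nonneg _, fun x => ?_⟩
    have h := (LinearMap.toContinuousLinearMap
      (((β Y).domRestrict C) ∘ₗ (S.symm : U →ₗ[ℝ] C))).le_opNorm x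
    rwa [LinearMap.coe_toContinuousLinearMap'] at h
  set w : W := β Y X with hwdef
  -- key estimate
  have hkey : ∀ ε : ℝ, 0 < ε → ‖w - (π w : W)‖ ≤ ε := by
    intro ε hε
    obtain ⟨P, hP0, hPdef⟩ : ∃ P : ℝ, 0 ≤ P ∧ ‖π w‖ = P := ⟨‖π w‖, norm_nonneg _, rfl⟩
    set δ : ℝ := min (1/(2*(Mc+1))) (ε/(2*(P+1)*(M'+Mc+1))) with hδdef
    have hδ : 0 < δ := by
      apply lt_min <;> positivity
    obtain ⟨t, htmem⟩ : ∃ t, t ∈ Set.Ioo (0:ℝ) δ \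
        {t : ℝ | ¬ Function.Injective ((1 : U →ₗ[ℝ] U) + t • Φ)} :=
      ((Set.Ioo_infinite hδ).diff (aux_finite_bad Φ)).nonempty
    obtain ⟨⟨ht0, htδ⟩, htgood⟩ := htmem
    have htinj : Function.Injective ((1 : U →ₗ[ℝ] U) + t • Φ) := not_not.1 htgood
    set v : V := e + t • Y with hvdef
    have hβv : ∀ z : V, β v z = β e z + t • β Y z := by
      intro z; simp [hvdef, map_add, map_smul]
    -- injectivity of β v on C
    have hπβv : ∀ c : C, π (β v (c : V)) = ((1 : U →ₗ[ℝ] U) + t • Φ) (S0 c) := by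
      intro c
      rw [hβv]
      rw [map_add, map_smul]
      have h1 : π (β e (c : V)) = S0 c := by
        rw [← hS0coe, hπU]
      have h2 : π (β Y (c : V)) = Φ (S0 c) := by
        rw [hΦapp]
        congr 2
        have : S.symm (S0 c) = c := by
          rw [← hSapp]; exact S.symm_apply_apply c
        rw [this]
      rw [h1, h2]
      simp
    have hvinj : Function.Injective ((β v).domRestrict C) := by
      rw [← LinearMap.ker_eq_bot, LinearMap.ker_eq_bot']
      intro c hc
      have h0 : β v (c : V) = 0 := hc
      have h1 : ((1 : U →ₗ[ℝ] U) + t • Φ) (S0 c) = 0 := by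
        rw [← hπβv, h0, map_zero]
      have h2 : S0 c = 0 := by
        apply htinj
        rw [h1, map_zero]
      exact hS0inj (by rw [h2, map_zero])
    -- the image of C is all of range (β v)
    have himg : Submodule.map (β v) C = LinearMap.range (β v) := by
      apply Submodule.eq_of_le_of_finrank_le (LinearMap.map_le_range)
      have hfr : Module.finrank ℝ (Submodule.map (β v) C) = Module.finrank ℝ C := by
        rw [← LinearMap.range_domRestrict]
        exact (LinearEquiv.finrank_eq (LinearEquiv.ofInjective _ hvinj)).symm
      rw [hfr, hrankC]
      exact hmax v
    -- obtain c
    have hmem : t • w ∈ Submodule.map (β v) C := by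
      rw [himg]
      refine ⟨X, ?_⟩
      rw [hβv, hX, zero_add]
    obtain ⟨c, hcC, hc⟩ := hmem
    have hceq : β e c + t • β Y c = t • w := by
      rw [← hβv]; exact hc
    set u : U := S0 ⟨c, hcC⟩ with hudef
    have hcu : ((S.symm u : C) : V) = c := by
      have : S.symm u = ⟨c, hcC⟩ := by rw [hudef, ← hSapp]; exact S.symm_apply_apply _
      rw [this]
    -- projected equation : u + t • Φ u = t • π w
    have hproj : u + t • Φ u = t • π w := by
      have := congrArg π hceq
      rw [map_add, map_smul, map_smul] at this
      have h1 : π (β e c) = u := by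
        have hco : β e c = ((u : U) : W) := rfl
        rw [hco, hπU]
      have h2 : π (β Y c) = Φ u := by
        rw [hΦapp, hcu]
      rw [h1, h2] at this
      exact this
    -- norm estimate for u
    have hΦu : ‖Φ u‖ ≤ Mc * ‖u‖ := hΦbound u
    have hu1 : ‖u‖ ≤ t * P + t * (Mc * ‖u‖) := by
      have : u = t • π w - t • Φ u := by rw [← hproj]; abel
      calc ‖u‖ = ‖t • π w - t • Φ u‖ := by rw [← this]
        _ ≤ ‖t • π w‖ + ‖t • Φ u‖ := norm_sub_le _ _
        _ = t * P + t * ‖Φ u‖ := by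
            rw [norm_smul, norm_smul, Real.norm_eq_abs, abs_of_pos ht0, hPdef]
        _ ≤ t * P + t * (Mc * ‖u‖) := by
            have := mul_le_mul_of_nonneg_left hΦu (le_of_lt ht0)
            linarith
    have htsmall : t * Mc ≤ 1/2 := by
      have h1 : t ≤ 1/(2*(Mc+1)) := le_of_lt (lt_of_lt_of_le htδ (min_le_left _ _))
      have h2 : t * Mc ≤ (1/(2*(Mc+1))) * Mc :=
        mul_le_mul_of_nonneg_right h1 hMc0
      have h3 : (1/(2*(Mc+1))) * Mc ≤ 1/2 := by
        rw [div_mul_eq_mul_div, div_le_div_iff₀ (by positivity) (by norm_num)]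
        nlinarith
      linarith
    have hu2 : ‖u‖ ≤ 2 * t * P := by
      have hu0 : (0:ℝ) ≤ ‖u‖ := norm_nonneg u
      have hm : t * Mc * ‖u‖ ≤ (1/2) * ‖u‖ := mul_le_mul_of_nonneg_right htsmall hu0
      have hm' : t * (Mc * ‖u‖) ≤ (1/2) * ‖u‖ := by rw [← mul_assoc]; exact hm
      linarith
    -- orthogonal part
    have horth : w - (π w : W) = β Y c - (Φ u : W) := by
      have h1 : t • w - t • (π w : W) = t • β Y c - t • (Φ u : W) := by
        have h2 : ((t • π w : U) : W) = ((u + t • Φ u : U) : W) := by rw [hproj]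
        rw [Submodule.coe_add, Submodule.coe_smul, Submodule.coe_smul] at h2
        have h3 : (u : W) = β e c := rfl
        rw [h3] at h2
        -- h2 : t • (π w : W) = β e c + t • (Φ u : W)
        rw [← hceq, h2]
        abel
      have h4 : t • (w - (π w : W)) = t • (β Y c - (Φ u : W)) := by
        rw [smul_sub, smul_sub]; exact h1
      exact smul_right_injective W (ne_of_gt ht0) h4
    have hbound : ‖w - (π w : W)‖ ≤ (M' + Mc) * ‖u‖ := by
      rw [horth]
      calc ‖β Y c - (Φ u : W)‖ ≤ ‖β Y c‖ + ‖(Φ u : W)‖ := norm_sub_le _ _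
        _ ≤ M' * ‖u‖ + Mc * ‖u‖ := by
            have hb1 : ‖β Y c‖ ≤ M' * ‖u‖ := by
              have := hΨbound u
              rwa [hcu] at this
            have hb2 : ‖(Φ u : W)‖ ≤ Mc * ‖u‖ := hΦu
            linarith
        _ = (M' + Mc) * ‖u‖ := by ring
    have htδ2 : t ≤ ε/(2*(P+1)*(M'+Mc+1)) := le_of_lt (lt_of_lt_of_le htδ (min_le_right _ _))
    exact aux_arith P M' Mc t ‖u‖ _ ε hP0 hM'0 hMc0 ht0 (norm_nonneg u) hu2 hbound htδ2
  -- conclude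
  have h0 : ‖w - (π w : W)‖ = 0 := by
    by_contra h
    have h1 : 0 < ‖w - (π w : W)‖ := lt_of_le_of_ne (norm_nonneg _) (Ne.symm h)
    have := hkey (‖w - (π w : W)‖/2) (by linarith)
    linarith
  have h2 : (π w : W) = w := by
    rw [norm_eq_zero, sub_eq_zero] at h0
    exact h0.symm
  exact Submodule.starProjection_eq_self_iff.1 h2

open scoped RealInnerProductSpace

/-- a flat symmetric bilinear map `β` into a positive definite inner product
space with trivial nullity satisfies `dim S(β) ≥ dim V`; in particular `dim W ≥ dim V`. -/
theorem finrank_le_of_flat_trivial_nullity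
    {V W : Type*} [AddCommGroup V] [Module ℝ V] [FiniteDimensional ℝ V]
    [NormedAddCommGroup W] [InnerProductSpace ℝ W] [FiniteDimensional ℝ W]
    (β : V →ₗ[ℝ] V →ₗ[ℝ] W) (hβsymm : ∀ x y : V, β x y = β y x)
    (hflat : ∀ w x y z : V, ⟪β w x, β y z⟫ = ⟪β y x, β w z⟫)
    (hnull : ∀ x : V, (∀ y : V, β x y = 0) → x = 0) :
    Module.finrank ℝ V ≤ Module.finrank ℝ ↥(Submodule.span ℝ {w : W | ∃ x y : V, β x y = w})
      ∧ Module.finrank ℝ V ≤ Module.finrank ℝ W := by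
  classical
  obtain ⟨e, he⟩ : ∃ e : V, ∀ v : V, Module.finrank ℝ (LinearMap.range (β v))
      ≤ Module.finrank ℝ (LinearMap.range (β e)) := by
    set s : Set ℕ := Set.range (fun v : V => Module.finrank ℝ (LinearMap.range (β v))) with hs
    have hne : s.Nonempty := ⟨_, ⟨0, rfl⟩⟩
    have hbdd : BddAbove s := by
      refine ⟨Module.finrank ℝ W, ?_⟩
      rintro _ ⟨v, rfl⟩
      exact Submodule.finrank_le _
    obtain ⟨e, hes⟩ := Nat.sSup_mem hne hbdd
    refine ⟨e, fun v => ?_⟩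
    have h1 : Module.finrank ℝ (LinearMap.range (β v)) ≤ sSup s := le_csSup hbdd ⟨v, rfl⟩
    exact le_of_le_of_eq h1 hes.symm
  have hinj : LinearMap.ker (β e) = ⊥ := by
    rw [LinearMap.ker_eq_bot']
    intro X hXe
    apply hnull
    intro Y
    have h1 : β Y X ∈ LinearMap.range (β e) := aux_key β e he X hXe Y
    have h2 : ∀ z : V, (inner ℝ (β Y X) (β e z) : ℝ) = 0 := by
      intro z
      rw [← hβsymm X Y, ← hβsymm z e, hflat X Y z e, hβsymm X e, hXe, inner_zero_right]
    obtain ⟨z, hz⟩ := h1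
    have h7 := h2 z
    rw [hz] at h7
    have h8 : β Y X = 0 := inner_self_eq_zero.1 h7
    rw [hβsymm X Y]
    exact h8
  have hrank : Module.finrank ℝ V = Module.finrank ℝ (LinearMap.range (β e)) := by
    have h1 := LinearMap.finrank_range_add_finrank_ker (β e)
    rw [hinj, finrank_bot] at h1
    omega
  have hle : LinearMap.range (β e) ≤ Submodule.span ℝ {w : W | ∃ x y : V, β x y = w} := by
    rintro _ ⟨z, rfl⟩
    exact Submodule.subset_span ⟨e, z, rfl⟩
  constructor
  · rw [hrank]
    exact Submodule.finrank_mono hle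
  · calc Module.finrank ℝ V = Module.finrank ℝ (LinearMap.range (β e)) := hrank
      _ ≤ Module.finrank ℝ W := Submodule.finrank_le _
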